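/- Let k be a field, V a k-vector space with an anisotropic quadratic form q over k, and consider the quadratic form q ⊥ ⟨t⟩ on V ⊕ k over the field of formal Laurent series k((t)) (extending q by scalars and adding the rank-one form x ↦ t·x²). Then q ⊥ ⟨t⟩ is anisotropic over k((t)). -/

import Mathlib

open scoped TensorProduct

section Aux

variable {k : Type*} [Field k]

/-- Coefficient of a sum of Hahn series. -/
lemma hahn_coeff_sum {ι : Type*} (s : Finset ι) (f : ι → LaurentSeries k) (n : ℤ) :
    (∑ i ∈ s, f i).coeff n = ∑ i ∈ s, (f i).coeff n :=
  map_sum (HahnSeries.coeff.addMonoidHom n) f s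

/-- Low coefficients of a product vanish. -/
lemma hahn_mul_coeff_eq_zero {f g : LaurentSeries k} {d e n : ℤ}
    (hf : ∀ m < d, f.coeff m = 0) (hg : ∀ m < e, g.coeff m = 0) (hn : n < d + e) :
    (f * g).coeff n = 0 := by
  rw [HahnSeries.coeff_mul]
  refine Finset.sum_eq_zero fun ij hij => ?_
  rw [Finset.mem_addAntidiagonal] at hij
  obtain ⟨h1, h2, h3⟩ := hij
  by_cases hd : ij.1 < d
  · rw [hf _ hd, zero_mul]
  by_cases he : ij.2 < e
  · rw [hg _ he, mul_zero]
  exfalso; push_neg at hd he; omega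

/-- Leading coefficient of a product. -/
lemma hahn_mul_coeff_lead {f g : LaurentSeries k} {d e : ℤ}
    (hf : ∀ m < d, f.coeff m = 0) (hg : ∀ m < e, g.coeff m = 0) :
    (f * g).coeff (d + e) = f.coeff d * g.coeff e := by
  rw [HahnSeries.coeff_mul]
  rw [Finset.sum_eq_single (d, e)]
  · intro b hb hne
    rw [Finset.mem_addAntidiagonal] at hb
    obtain ⟨h1, h2, h3⟩ := hb
    rw [HahnSeries.mem_support] at h1 h2
    by_cases hd : b.1 < d
    · rw [hf _ hd, zero_mul]
    by_cases he : b.2 < e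
    · rw [hg _ he, mul_zero]
    exfalso
    push_neg at hd he
    apply hne
    have : b.1 = d := by omega
    have : b.2 = e := by omega
    exact Prod.ext ‹b.1 = d› ‹b.2 = e›
  · intro h
    by_cases hfd : f.coeff d = 0
    · rw [hfd, zero_mul]
    by_cases hge : g.coeff e = 0
    · rw [hge, mul_zero]
    exact absurd (Finset.mem_addAntidiagonal.mpr ⟨(HahnSeries.mem_support f d).mpr hfd,
      (HahnSeries.mem_support g e).mpr hge, rfl⟩) h

/-- The algebra map from `k` into Laurent series. -/
lemma laurent_algebraMap (r : k) :
    algebraMap k (LaurentSeries k) r = HahnSeries.single (0 : ℤ) r := by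
  rw [HahnSeries.algebraMap_apply', PowerSeries.algebraMap_apply]
  simp [HahnSeries.ofPowerSeries_C, HahnSeries.C_apply]

lemma laurent_mul_algebraMap_coeff (f : LaurentSeries k) (r : k) (m : ℤ) :
    (f * algebraMap k (LaurentSeries k) r).coeff m = f.coeff m * r := by
  rw [laurent_algebraMap]
  exact HahnSeries.coeff_mul_single_zero

end Aux

section Core

variable {k : Type*} [Field k] [Invertible (2 : k)]
variable {V : Type*} [AddCommGroup V] [Module k V]

set_option maxHeartbeats 1000000 in
set_option synthInstance.maxHeartbeats 1000000 in
/-- Core lemma: the base change of an anisotropic form to `k((t))` has, at each nonzero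
vector, a value with nonvanishing coefficient in some even degree `2d`, and vanishing
coefficients below. -/
lemma baseChange_coeff_core (q : QuadraticForm k V) (hq : q.Anisotropic) :
    ∀ x, x ≠ 0 → ∃ d : ℤ, (∀ n < 2 * d, (q.baseChange (LaurentSeries k) x).coeff n = 0) ∧
      (q.baseChange (LaurentSeries k) x).coeff (2 * d) ≠ 0 := by
  classical
  intro x hx
  letI : Invertible (2 : LaurentSeries k) := (Invertible.map (algebraMap k (LaurentSeries k)) 2).copy 2 (map_ofNat _ _).symm
  set b : LinearMap.BilinForm k V := QuadraticMap.associated (R := k) q with hbdef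
  set B := LinearMap.BilinForm.baseChange (A := LaurentSeries k) b with hBdef
  have hQB : ∀ y, q.baseChange (LaurentSeries k) y = B y y := by
    intro y
    rw [hBdef, hbdef, ← QuadraticForm.associated_baseChange]
    exact (QuadraticMap.associated_eq_self_apply (LaurentSeries k) _ y).symm
  have hqb : ∀ v : V, q v = b v v := fun v =>
    (QuadraticMap.associated_eq_self_apply k q v).symm
  -- choose a basis of V
  let bV := Module.Basis.ofVectorSpace k V
  let bK := bV.baseChange (LaurentSeries k)
  set c := bK.repr x with hc
  have hcne : c ≠ 0 := fun h => hx (bK.repr.map_eq_zero_iff.mp (hc ▸ h))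
  set s := c.support with hs
  have hsne : s.Nonempty := Finsupp.support_nonempty_iff.mpr hcne
  set d := s.inf' hsne (fun i => (c i).order) with hd
  have hcd : ∀ i, ∀ m < d, (c i).coeff m = 0 := by
    intro i m hm
    by_cases hi : i ∈ s
    · exact HahnSeries.coeff_eq_zero_of_lt_order
        (lt_of_lt_of_le hm (Finset.inf'_le _ hi))
    · rw [Finsupp.notMem_support_iff.mp hi, HahnSeries.coeff_zero]
  obtain ⟨i₀, hi₀, hdi₀⟩ := Finset.exists_mem_eq_inf' hsne (fun i => (c i).order)
  -- the leading vector
  set w : V := ∑ i ∈ s, (c i).coeff d • (bV i) with hw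
  have hwne : w ≠ 0 := by
    intro h0
    have hrepr : bV.repr w i₀ = (c i₀).coeff d := by
      rw [hw, map_sum]
      rw [Finsupp.finset_sum_apply]
      rw [Finset.sum_eq_single_of_mem i₀ hi₀]
      · simp
      · intro j hj hne
        simp [Finsupp.single_apply, hne]
    rw [h0] at hrepr
    simp only [map_zero, Finsupp.coe_zero, Pi.zero_apply] at hrepr
    have : (c i₀).coeff ((c i₀).order) ≠ 0 :=
      HahnSeries.coeff_order_eq_zero.not.mpr (Finsupp.mem_support_iff.mp hi₀)
    rw [← hdi₀] at this
    exact this hrepr.symm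
  -- expansion of B x x
  have hexp : B x x = ∑ i ∈ s, ∑ j ∈ s,
      (c i) * ((c j) * (algebraMap k (LaurentSeries k) (b (bV i) (bV j)))) := by
    have := LinearMap.sum_repr_mul_repr_mul bK bK (B := B) x x
    rw [← this]
    simp only [Finsupp.sum, ← hc]
    refine Finset.sum_congr rfl fun i hi => ?_
    refine Finset.sum_congr rfl fun j hj => ?_
    have hBij : B (bK i) (bK j) = algebraMap k (LaurentSeries k) (b (bV i) (bV j)) := by
      rw [Module.Basis.baseChange_apply (S := LaurentSeries k) bV i,
        Module.Basis.baseChange_apply (S := LaurentSeries k) bV j]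
      rw [hBdef, LinearMap.BilinForm.baseChange_tmul]
      rw [mul_one, Algebra.algebraMap_eq_smul_one]
    rw [hBij, smul_eq_mul, smul_eq_mul]
  -- coefficient bounds for each summand
  have hterm_lt : ∀ i j, ∀ n < 2 * d,
      ((c i) * ((c j) * (algebraMap k (LaurentSeries k) (b (bV i) (bV j))))).coeff n = 0 := by
    intro i j n hn
    have hgj : ∀ m < d, ((c j) * (algebraMap k (LaurentSeries k) (b (bV i) (bV j)))).coeff m = 0 := by
      intro m hm
      rw [laurent_mul_algebraMap_coeff, hcd j m hm, zero_mul]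
    exact hahn_mul_coeff_eq_zero (hcd i) hgj (by omega)
  have hterm_lead : ∀ i j,
      ((c i) * ((c j) * (algebraMap k (LaurentSeries k) (b (bV i) (bV j))))).coeff (2 * d)
        = (c i).coeff d * ((c j).coeff d * b (bV i) (bV j)) := by
    intro i j
    have hgj : ∀ m < d, ((c j) * (algebraMap k (LaurentSeries k) (b (bV i) (bV j)))).coeff m = 0 := by
      intro m hm
      rw [laurent_mul_algebraMap_coeff, hcd j m hm, zero_mul]
    have := hahn_mul_coeff_lead (hcd i) hgj
    rw [show d + d = 2 * d by ring] at this
    rw [this, laurent_mul_algebraMap_coeff]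
  refine ⟨d, ?_, ?_⟩
  · intro n hn
    rw [hQB, hexp, hahn_coeff_sum]
    refine Finset.sum_eq_zero fun i hi => ?_
    rw [hahn_coeff_sum]
    exact Finset.sum_eq_zero fun j hj => hterm_lt i j n hn
  · rw [hQB, hexp, hahn_coeff_sum]
    have h1 : ∑ i ∈ s, (∑ j ∈ s,
        (c i) * ((c j) * (algebraMap k (LaurentSeries k) (b (bV i) (bV j))))).coeff (2 * d)
        = ∑ i ∈ s, ∑ j ∈ s, (c i).coeff d * ((c j).coeff d * b (bV i) (bV j)) :=
      Finset.sum_congr rfl fun i _ => by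
        rw [hahn_coeff_sum]
        exact Finset.sum_congr rfl fun j _ => hterm_lead i j
    have h2 : b w w = ∑ i ∈ s, ∑ j ∈ s, (c i).coeff d * ((c j).coeff d * b (bV i) (bV j)) := by
      rw [hw]
      simp only [map_sum, LinearMap.sum_apply, map_smul, LinearMap.smul_apply, smul_eq_mul,
        Finset.mul_sum]
      rw [Finset.sum_comm]
      exact Finset.sum_congr rfl fun i _ => Finset.sum_congr rfl fun j _ => by ring
    rw [h1, ← h2, ← hqb]
    exact fun h => hwne (hq w h)

end Core

set_option maxHeartbeats 1000000 in
set_option synthInstance.maxHeartbeats 1000000 in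
/-- Let `q` be an anisotropic quadratic form on a `k`-vector space `V`.  Over the
Laurent series field `K = k((t))`, the quadratic form `q ⊥ ⟨t⟩` on `(K ⊗ V) × K`
(the base change of `q` plus the rank-one form `x ↦ t·x²`) is anisotropic. -/
theorem baseChange_add_t_anisotropic
    (k : Type*) [Field k] [Invertible (2 : k)]
    (V : Type*) [AddCommGroup V] [Module k V]
    (q : QuadraticForm k V) (hq : q.Anisotropic) :
    (QuadraticMap.prod
      (q.baseChange (LaurentSeries k))
      ((HahnSeries.single (1 : ℤ) (1 : k) : LaurentSeries k) •
        (QuadraticMap.sq (R := LaurentSeries k)))).Anisotropic := by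
  classical
  rintro ⟨x, a⟩ hp
  rw [QuadraticMap.prod_apply] at hp
  have hPa : ((HahnSeries.single (1 : ℤ) (1 : k) : LaurentSeries k) •
      (QuadraticMap.sq (R := LaurentSeries k))) a = HahnSeries.single (1 : ℤ) (1 : k) * (a * a) := by
    rw [QuadraticMap.smul_apply, QuadraticMap.sq_apply, smul_eq_mul]
  rw [hPa] at hp
  -- coefficients of the `t·a²` part
  have hPcoeff_lt : a ≠ 0 → ∀ n < 2 * a.order + 1,
      ((HahnSeries.single (1 : ℤ) (1 : k) : LaurentSeries k) * (a * a)).coeff n = 0 := by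
    intro ha n hn
    have h1 : ∀ m < 2 * a.order, (a * a).coeff m = 0 := fun m hm =>
      hahn_mul_coeff_eq_zero (fun p hp => HahnSeries.coeff_eq_zero_of_lt_order hp)
        (fun p hp => HahnSeries.coeff_eq_zero_of_lt_order hp) (by omega)
    have h2 : ((HahnSeries.single (1 : ℤ) (1 : k) : LaurentSeries k) * (a * a)).coeff ((n - 1) + 1)
        = 1 * (a * a).coeff (n - 1) := HahnSeries.coeff_single_mul_add
    rw [show n = (n - 1) + 1 by ring, h2, h1 (n - 1) (by omega), mul_zero]
  have hPcoeff_ne : a ≠ 0 →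
      ((HahnSeries.single (1 : ℤ) (1 : k) : LaurentSeries k) * (a * a)).coeff (2 * a.order + 1) ≠ 0 := by
    intro ha
    have h1 : (a * a).coeff (a.order + a.order) = a.coeff a.order * a.coeff a.order :=
      hahn_mul_coeff_lead (fun p hp => HahnSeries.coeff_eq_zero_of_lt_order hp)
        (fun p hp => HahnSeries.coeff_eq_zero_of_lt_order hp)
    have h2 : ((HahnSeries.single (1 : ℤ) (1 : k) : LaurentSeries k) * (a * a)).coeff
        ((2 * a.order) + 1) = 1 * (a * a).coeff (2 * a.order) := HahnSeries.coeff_single_mul_add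
    rw [h2, one_mul, show 2 * a.order = a.order + a.order by ring, h1]
    exact mul_ne_zero ((HahnSeries.coeff_order_eq_zero.not.mpr ha)) ((HahnSeries.coeff_order_eq_zero.not.mpr ha))
  have hcoeff : ∀ n : ℤ, (q.baseChange (LaurentSeries k) x).coeff n
      = - ((HahnSeries.single (1 : ℤ) (1 : k) : LaurentSeries k) * (a * a)).coeff n := by
    intro n
    have := congrArg (fun z : LaurentSeries k => z.coeff n) hp
    simp only [HahnSeries.coeff_add, HahnSeries.coeff_zero] at this
    linear_combination this
  have hx0 : x = 0 := by
    by_contra hx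
    obtain ⟨d, hlow, hne⟩ := baseChange_coeff_core q hq x hx
    by_cases ha : a = 0
    · apply hne
      rw [hcoeff]
      rw [ha]
      simp
    · set e := a.order with he
      rcases lt_trichotomy (2 * d) (2 * e + 1) with h | h | h
      · exact hne (by rw [hcoeff]; rw [hPcoeff_lt ha _ h]; ring)
      · omega
      · exact hPcoeff_ne ha (by rw [← neg_eq_zero, ← hcoeff, hlow _ h])
  have ha0 : a = 0 := by
    rw [hx0, QuadraticMap.map_zero, zero_add] at hp
    rcases mul_eq_zero.mp hp with h | h
    · exact absurd h (HahnSeries.single_ne_zero one_ne_zero)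
    · exact (mul_self_eq_zero).mp h
  rw [hx0, ha0]
  rfl
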